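/- Weak duality for the submodular assignment LP: let f be monotone submodular with f(∅)=0 on finite E, partitioned as E = Q₁ ∪ ... ∪ Q_n, with values v ∈ ℝ≥0^E and costs b ∈ ℝ>0^E. Suppose x ∈ ℝ≥0^E satisfies x(Q_j) ≤ 1 for all j and ∑_{e∈S} b_e x_e ≤ f(S) for all S ⊆ E, and suppose (γ, β) ∈ ℝ≥0^E × ℝ≥0^n satisfies b_e γ_e + β_{j(e)} ≥ v_e for all e ∈ E (where j(e) is the index with e ∈ Q_{j(e)}). Then ∑_e v_e x_e ≤ L_f(γ) + ∑_j β_j, where L_f(γ) = ∫_0^∞ f({e : γ_e ≥ t}) dt. -/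

import Mathlib

open Finset MeasureTheory

variable {E : Type*} [Fintype E] [DecidableEq E]

open Classical in
noncomputable def lovasz (f : Finset E → ℝ) (w : E → ℝ) : ℝ :=
  ∫ t in Set.Ioi (0 : ℝ), f (Finset.univ.filter (fun e => t ≤ w e))

theorem SAP_weak_duality (f : Finset E → ℝ) (n : ℕ)
    (jdx : E → Fin n) -- e belongs to part Q_{jdx e}; the parts partition E
    (v b x γ : E → ℝ) (β : Fin n → ℝ)
    (hmono : ∀ A B : Finset E, A ⊆ B → f A ≤ f B)
    (hsub : ∀ A B : Finset E, f (A ∪ B) + f (A ∩ B) ≤ f A + f B)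
    (h0 : f ∅ = 0)
    (hv : ∀ e, 0 ≤ v e) (hb : ∀ e, 0 < b e)
    -- primal feasibility
    (hx : ∀ e, 0 ≤ x e)
    (hxQ : ∀ j : Fin n, ∑ e ∈ Finset.univ.filter (fun e => jdx e = j), x e ≤ 1)
    (hxf : ∀ S : Finset E, ∑ e ∈ S, b e * x e ≤ f S)
    -- dual feasibility
    (hγ : ∀ e, 0 ≤ γ e) (hβ : ∀ j, 0 ≤ β j)
    (hdual : ∀ e : E, v e ≤ b e * γ e + β (jdx e)) :
    ∑ e : E, v e * x e ≤ lovasz f γ + ∑ j : Fin n, β j := by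
  classical
  set M : ℝ := ∑ e : E, γ e with hM
  have hM0 : 0 ≤ M := Finset.sum_nonneg fun e _ => hγ e
  have hγM : ∀ e, γ e ≤ M := fun e =>
    Finset.single_le_sum (fun e _ => hγ e) (Finset.mem_univ e)
  set h : ℝ → ℝ := fun t => f (Finset.univ.filter (fun e => t ≤ γ e)) with hh
  have hanti : Antitone h := by
    intro t₁ t₂ hle
    apply hmono
    intro e he
    simp only [Finset.mem_filter, Finset.mem_univ, true_and] at he ⊢
    exact hle.trans he
  have hzero : ∀ t, M < t → h t = 0 := by
    intro t ht
    have : Finset.univ.filter (fun e => t ≤ γ e) = ∅ := by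
      apply Finset.filter_false_of_mem
      intro e _
      push_neg
      exact lt_of_le_of_lt (hγM e) ht
    simp [hh, this, h0]
  have hnn : ∀ t, 0 ≤ h t := fun t => h0 ▸ hmono ∅ _ (Finset.empty_subset _)
  have hbd : ∀ t, h t ≤ f Finset.univ := fun t => hmono _ _ (Finset.filter_subset _ _)
  have hmeas : Measurable h := hanti.measurable
  have hInt : IntegrableOn h (Set.Ioi 0) := by
    have h1 : IntegrableOn h (Set.Ioc 0 M) := by
      refine Measure.integrableOn_of_bounded (by simp) hmeas.aestronglyMeasurable
        (M := f Finset.univ) ?_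
      have hfu : 0 ≤ f Finset.univ := h0 ▸ hmono ∅ _ (Finset.empty_subset _)
      filter_upwards with t
      rw [Real.norm_eq_abs, abs_le]
      exact ⟨by linarith [hnn t, hfu], hbd t⟩
    have h2 : IntegrableOn h (Set.Ioi M) := by
      exact (integrableOn_congr_fun (g := fun _ => (0:ℝ))
        (fun t ht => hzero t ht) measurableSet_Ioi).2 (integrable_zero _ _ _).integrableOn
    have : Set.Ioi (0:ℝ) ⊆ Set.Ioc 0 M ∪ Set.Ioi M := by
      intro t ht
      rcases le_or_gt t M with h' | h'
      · exact Or.inl ⟨ht, h'⟩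
      · exact Or.inr h'
    exact (h1.union h2).mono_set this
  set g : ℝ → ℝ := fun t => ∑ e : E, Set.indicator (Set.Iic (γ e)) (fun _ => b e * x e) t
    with hg
  have hgterm : ∀ e : E, IntegrableOn (Set.indicator (Set.Iic (γ e)) (fun _ => b e * x e))
      (Set.Ioi 0) := by
    intro e
    rw [IntegrableOn, integrable_indicator_iff measurableSet_Iic, IntegrableOn,
      Measure.restrict_restrict measurableSet_Iic]
    exact (integrableOn_const_iff enorm_ne_top).2 (Or.inr (by
      rw [show Set.Iic (γ e) ∩ Set.Ioi 0 = Set.Ioc 0 (γ e) by ext t; simp [Set.mem_Ioc, and_comm]]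
      exact measure_Ioc_lt_top))
  have hgInt : IntegrableOn g (Set.Ioi 0) :=
    MeasureTheory.integrable_finset_sum _ (fun e _ => hgterm e)
  have hgle : ∀ t ∈ Set.Ioi (0:ℝ), g t ≤ h t := by
    intro t _
    have : g t = ∑ e ∈ Finset.univ.filter (fun e => t ≤ γ e), b e * x e := by
      rw [Finset.sum_filter]
      refine Finset.sum_congr rfl fun e _ => ?_
      by_cases hc : t ≤ γ e <;> simp [Set.indicator, hc]
    rw [this]
    exact hxf _
  have hgval : ∫ t in Set.Ioi (0:ℝ), g t = ∑ e : E, b e * x e * γ e := by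
    rw [hg, MeasureTheory.integral_finset_sum _ (fun e _ => hgterm e)]
    refine Finset.sum_congr rfl fun e _ => ?_
    rw [setIntegral_indicator measurableSet_Iic,
      show Set.Ioi 0 ∩ Set.Iic (γ e) = Set.Ioc 0 (γ e) by ext t; simp [Set.mem_Ioc],
      setIntegral_const, Real.volume_real_Ioc, smul_eq_mul]
    rw [max_eq_left (by linarith [hγ e])]
    ring
  have key : ∑ e : E, b e * x e * γ e ≤ lovasz f γ := by
    have : lovasz f γ = ∫ t in Set.Ioi (0:ℝ), h t := by
      simp only [lovasz, hh]
    rw [← hgval, this]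
    exact setIntegral_mono_on hgInt hInt measurableSet_Ioi hgle
  have hβpart : ∑ e : E, β (jdx e) * x e ≤ ∑ j : Fin n, β j := by
    rw [← Finset.sum_fiberwise Finset.univ jdx (fun e => β (jdx e) * x e)]
    refine Finset.sum_le_sum fun j _ => ?_
    have : ∑ e ∈ Finset.univ.filter (fun e => jdx e = j), β (jdx e) * x e
        = β j * ∑ e ∈ Finset.univ.filter (fun e => jdx e = j), x e := by
      rw [Finset.mul_sum]
      refine Finset.sum_congr rfl fun e he => ?_
      simp only [Finset.mem_filter] at he
      rw [he.2]
    rw [this]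
    calc β j * ∑ e ∈ Finset.univ.filter (fun e => jdx e = j), x e
        ≤ β j * 1 := mul_le_mul_of_nonneg_left (hxQ j) (hβ j)
      _ = β j := mul_one _
  calc ∑ e : E, v e * x e
      ≤ ∑ e : E, (b e * γ e + β (jdx e)) * x e :=
        Finset.sum_le_sum fun e _ => mul_le_mul_of_nonneg_right (hdual e) (hx e)
    _ = ∑ e : E, b e * x e * γ e + ∑ e : E, β (jdx e) * x e := by
        rw [← Finset.sum_add_distrib]; exact Finset.sum_congr rfl fun e _ => by ring
    _ ≤ lovasz f γ + ∑ j : Fin n, β j := add_le_add key hβpart
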